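/- arXiv:1612.06730 — 4 statements merged into one kernel-verified Lean document; each statement's English description precedes it below -/
import Mathlib

section
/- Consider the tridiagonal linear system: -b·a_0 + r·a_1 = (r-2)(g-1) - 2 + b, and -n_k·a_k + a_{k-1} + a_{k+1} = -2 + n_k for k = 1,...,λ (with a_{λ+1} = 0), where g = gcd(r,d), b = g(1+b'β)/α, α = d/g, b' = r/g, β ∈ (0,α) satisfies b'β ≡ -1 (mod α), and n_1,...,n_λ are the Hirzebruch–Jung digits of α/β. Then the solution satisfies a_0 = (2-r)α + b' - 1, a_1 = (2-r)β + (1+b'β)/α - 1, and a_λ = -(r-2). -/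
/-- Companion sequence: second column of the product of transfer matrices,
indexed backwards: `Eseq n lam j` corresponds to `ẽ (lam + 1 - j)` where
`ẽ (lam+1) = 1`, `ẽ lam = 0`, `ẽ (k-1) = n k * ẽ k - ẽ (k+1)`. -/
def Eseq (n : ℕ → ℤ) (lam : ℕ) : ℕ → ℤ
  | 0 => 1
  | 1 => 0
  | j + 2 => n (lam - j) * Eseq n lam (j + 1) - Eseq n lam j

set_option maxHeartbeats 1000000 in
/-- The tridiagonal system `-b·a₀ + r·a₁ = (r-2)(g-1) - 2 + b`,
`-n_k·a_k + a_{k-1} + a_{k+1} = -2 + n_k` for `k = 1,…,λ` (with `a_{λ+1} = 0`),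
where `g = gcd(r,d)`, `α = d/g`, `b' = r/g`, `0 < β < α` with `b'β ≡ -1 (mod α)`,
`b = g(1+b'β)/α`, and `n₁,…,n_λ` are the Hirzebruch–Jung digits of `α/β`
(encoded by the auxiliary sequence `c`), has solution
`a₀ = (2-r)α + b' - 1`, `a₁ = (2-r)β + (1+b'β)/α - 1`, `a_λ = -(r-2)`. -/
theorem stmt_10 (r d g α b' β b : ℤ) (hr : 3 ≤ r) (hrd : r ≤ d)
    (hg : g = Int.gcd r d) (hα : α = d / g) (hb' : b' = r / g)
    (hβ0 : 0 < β) (hβα : β < α) (hmod : α ∣ b' * β + 1)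
    (hb : b = g * (1 + b' * β) / α)
    (lam : ℕ) (hlam : 1 ≤ lam) (n : ℕ → ℤ) (hn : ∀ i, 1 ≤ i → i ≤ lam → 2 ≤ n i)
    (c : ℕ → ℤ) (hc0 : c 0 = α) (hc1 : c 1 = β)
    (hclam : c lam = 1) (hclam1 : c (lam + 1) = 0)
    (hcpos : ∀ i ≤ lam, 0 < c i)
    (hcrec : ∀ i, 1 ≤ i → i ≤ lam → c (i - 1) = n i * c i - c (i + 1))
    (a : ℕ → ℤ) (hatop : a (lam + 1) = 0)
    (hsys0 : -b * a 0 + r * a 1 = (r - 2) * (g - 1) - 2 + b)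
    (hsysk : ∀ k, 1 ≤ k → k ≤ lam → -(n k) * a k + a (k - 1) + a (k + 1) = -2 + n k) :
    a 0 = (2 - r) * α + b' - 1 ∧
    a 1 = (2 - r) * β + (1 + b' * β) / α - 1 ∧
    a lam = -(r - 2) := by
  have hα2 : 2 ≤ α := by omega
  have hα0 : α ≠ 0 := by omega
  have hg0 : 0 < g := by
    rw [hg]
    have hr0 : r ≠ 0 := by omega
    exact_mod_cast Nat.pos_of_ne_zero (fun h => hr0 (Int.gcd_eq_zero_iff.mp h).1)
  have hgneq : g ≠ 0 := ne_of_gt hg0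
  have hgr : g ∣ r := by rw [hg]; exact Int.gcd_dvd_left r d
  have hgd : g ∣ d := by rw [hg]; exact Int.gcd_dvd_right r d
  have hrg : g * b' = r := by rw [hb']; exact Int.mul_ediv_cancel' hgr
  have hdg : g * α = d := by rw [hα]; exact Int.mul_ediv_cancel' hgd
  obtain ⟨q, hq⟩ := hmod
  have hq' : (1 + b' * β) / α = q := by
    have h : 1 + b' * β = α * q := by linarith
    rw [h, Int.mul_ediv_cancel_left _ hα0]
  have hbq : b = g * q := by
    rw [hb]
    have h : g * (1 + b' * β) = α * (g * q) := by linear_combination g * hq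
    rw [h, Int.mul_ediv_cancel_left _ hα0]
  have hb'1 : 1 ≤ b' := by
    by_contra hcon
    push_neg at hcon
    have : g * b' ≤ 0 := mul_nonpos_of_nonneg_of_nonpos hg0.le (by omega)
    omega
  have hb'le : b' ≤ α := by
    have : g * b' ≤ g * α := by omega
    exact le_of_mul_le_mul_left this hg0
  have hb'α : b' < α := by
    rcases lt_or_eq_of_le hb'le with h | h
    · exact h
    · exfalso
      have h1 : (1 : ℤ) = α * (q - β) := by rw [h] at hq; linear_combination hq
      have h2 : α ∣ (1 : ℤ) := ⟨q - β, h1⟩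
      have := Int.le_of_dvd one_pos h2
      omega
  set E := Eseq n lam with hEdef
  have hE0 : E 0 = 1 := rfl
  have hE1 : E 1 = 0 := rfl
  have hErec : ∀ j, E (j + 2) = n (lam - j) * E (j + 1) - E j := fun j => rfl
  -- recurrence for c in reversed coordinates
  have hCrec : ∀ j, j + 2 ≤ lam + 1 →
      c (lam + 1 - (j + 2)) = n (lam - j) * c (lam + 1 - (j + 1)) - c (lam + 1 - j) := by
    intro j hj
    have h := hcrec (lam - j) (by omega) (by omega)
    have e1 : lam + 1 - (j + 2) = lam - j - 1 := by omega
    have e2 : lam + 1 - (j + 1) = lam - j := by omega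
    have e3 : lam + 1 - j = lam - j + 1 := by omega
    rw [e1, e2, e3]
    exact h
  -- Wronskian
  have hW : ∀ j, j ≤ lam → c (lam + 1 - (j + 1)) * E j - c (lam + 1 - j) * E (j + 1) = 1 := by
    intro j
    induction j with
    | zero =>
      intro _
      have e1 : lam + 1 - 1 = lam := by omega
      have e2 : lam + 1 - 0 = lam + 1 := by omega
      rw [e1, e2, hclam, hclam1, hE0, hE1]; ring
    | succ j ih =>
      intro hj
      have hprev := ih (by omega)
      have h2 := hCrec j (by omega)
      have hEr := hErec j
      rw [h2, hEr]
      linear_combination hprev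
  -- bounds
  have hBnd : ∀ j, 1 ≤ j → j ≤ lam →
      (0 ≤ -E j ∧ -E j < -E (j + 1)) ∧
      (1 ≤ c (lam + 1 - j) + E j ∧
        c (lam + 1 - j) + E j ≤ c (lam + 1 - (j + 1)) + E (j + 1)) := by
    intro j hj1
    induction j, hj1 using Nat.le_induction with
    | base =>
      intro _
      have hE2 : E 2 = -1 := by
        have := hErec 0
        simp [hE0, hE1] at this
        omega
      have hC2 : c (lam + 1 - 2) = n lam := by
        have := hCrec 0 (by omega)
        have e1 : lam + 1 - 1 = lam := by omega
        have e2 : lam + 1 - 0 = lam + 1 := by omega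
        rw [e1, e2, hclam, hclam1] at this
        simpa using this
      have hn2 : 2 ≤ n lam := hn lam hlam le_rfl
      have e1 : lam + 1 - 1 = lam := by omega
      rw [e1, hclam, hC2, hE1, hE2]
      norm_num
      omega
    | succ j hj ih =>
      intro hjlam
      obtain ⟨⟨hb1, hb2⟩, hg1, hg2⟩ := ih (by omega)
      have hn2 : 2 ≤ n (lam - j) := hn (lam - j) (by omega) (by omega)
      have hc2 := hCrec j (by omega)
      have hEr := hErec j
      have hG1 : 1 ≤ c (lam + 1 - (j + 1)) + E (j + 1) := le_trans hg1 hg2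
      refine ⟨⟨by linarith, ?_⟩, hG1, ?_⟩
      · rw [hEr]
        nlinarith [mul_nonneg (by linarith : (0:ℤ) ≤ n (lam - j) - 2)
          (by linarith : (0:ℤ) ≤ -E (j + 1))]
      · rw [hc2, hEr]
        nlinarith [mul_nonneg (by linarith : (0:ℤ) ≤ n (lam - j) - 2)
          (by linarith : (0:ℤ) ≤ c (lam + 1 - (j + 1)) + E (j + 1))]
  -- Wronskian at lam
  have e4 : lam + 1 - lam = 1 := by omega
  have e5 : lam + 1 - (lam + 1) = 0 := by omega
  have hWlam : α * E lam - β * E (lam + 1) = 1 := by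
    have := hW lam le_rfl
    rw [e4, e5, hc0, hc1] at this
    linarith
  obtain ⟨⟨hb1, hb2⟩, hg1, hg2⟩ := hBnd lam hlam le_rfl
  rw [e4, hc1] at hg1
  rw [e4, e5, hc0, hc1] at hg2
  -- E (lam+1) ≤ -1, E (lam+1) ≥ 1 - α
  have hEup : E (lam + 1) ≤ -1 := by omega
  have hElo : 1 - α ≤ E (lam + 1) := by omega
  -- coprimality and divisibility pin E (lam+1)
  have hcop : IsCoprime α β := ⟨E lam, -E (lam + 1), by linear_combination hWlam⟩
  have hdvd1 : α ∣ β * (E (lam + 1) - b') :=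
    ⟨E lam - q, by linear_combination -hWlam - hq⟩
  have hdvd : α ∣ (E (lam + 1) - b') := hcop.dvd_of_dvd_mul_left hdvd1
  obtain ⟨t, ht⟩ := hdvd
  have hEl1 : E (lam + 1) = b' - α := by
    have h1 : α * t ≤ -2 := by linarith
    have h2 : -2 * α + 2 ≤ α * t := by linarith
    have ht0 : t < 0 := by nlinarith
    have ht2 : -2 < t := by nlinarith
    have : t = -1 := by omega
    rw [this] at ht
    linarith
  have hEl : E lam = q - β := by
    have h : α * E lam = α * (q - β) := by linear_combination hWlam + β * hEl1 + hq
    exact mul_left_cancel₀ hα0 h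
  -- main induction
  set A := a lam + 1 with hA
  have hMain : ∀ j, j + 1 ≤ lam + 1 →
      (a (lam + 1 - j) + 1 = A * c (lam + 1 - j) + E j ∧
       a (lam + 1 - (j + 1)) + 1 = A * c (lam + 1 - (j + 1)) + E (j + 1)) := by
    intro j
    induction j with
    | zero =>
      intro _
      constructor
      · have e2 : lam + 1 - 0 = lam + 1 := by omega
        rw [e2, hatop, hclam1, hE0]; ring
      · have e1 : lam + 1 - 1 = lam := by omega
        rw [e1, hclam, hE1]; ring
    | succ j ih =>
      intro hj
      obtain ⟨h1, h2⟩ := ih (by omega)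
      refine ⟨h2, ?_⟩
      have hs := hsysk (lam - j) (by omega) (by omega)
      have hc2 := hCrec j (by omega)
      have hEr := hErec j
      have e1 : lam + 1 - (j + 2) = lam - j - 1 := by omega
      have e2 : lam + 1 - (j + 1) = lam - j := by omega
      have e3 : lam + 1 - j = lam - j + 1 := by omega
      rw [e2] at h2
      rw [e3] at h1
      rw [e1, e2, e3] at hc2
      rw [e1, hc2, hEr]
      linear_combination hs + n (lam - j) * h2 - h1
  obtain ⟨hS1, hS0⟩ := hMain lam (by omega)
  rw [e4, hc1, hEl] at hS1
  rw [e5, hc0, hEl1] at hS0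
  -- solve for A
  have ha0 : a 0 = A * α + (b' - α) - 1 := by linarith
  have ha1 : a 1 = A * β + (q - β) - 1 := by linarith
  rw [ha0, ha1, hbq, ← hrg] at hsys0
  have key : g * (A - (3 - g * b')) = 0 := by
    linear_combination (-1 : ℤ) * hsys0 + (g * A - g) * hq
  have hA3 : A - (3 - g * b') = 0 := by
    rcases mul_eq_zero.mp key with h | h
    · exact absurd h hgneq
    · exact h
  have hAval : A = 3 - r := by rw [← hrg]; linarith
  refine ⟨?_, ?_, ?_⟩
  · linear_combination hS0 + α * hAval
  · rw [hq']; linear_combination hS1 + β * hAval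
  · simp only [hA] at hAval; linarith
end

section
/- In the setting of the resolution of the singularity G_r(u,v) + t^d = 0 with r ≥ 3 and d ≢ 1 (mod r): DCI_{r,d} = -d(r-2)^2 - r·Σ_{i=1}^{λ}(n_i - 2) + 2(r-2)(r - gcd(r,d)) + (r - b), where b = gcd(r,d)(1+b'β)/α, and moreover each of the three correction terms -r·Σ(n_i-2), 2(r-2)(r-gcd(r,d)), and r-b satisfies: the first is ≤ 0 and the last two are ≥ 0; in particular r - b = (gcd(r,d)/α)(b'(α-β) - 1) ≥ 0. -/
/-- For the resolution of `G_r(u,v) + t^d = 0` with `r ≥ 3`, `d ≢ 1 (mod r)`: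
`DCI_{r,d} = -d(r-2)² - r·∑(nᵢ-2) + 2(r-2)(r - gcd(r,d)) + (r - b)` with
`b = gcd(r,d)(1+b'β)/α`, and the three correction terms satisfy:
`-r·∑(nᵢ-2) ≤ 0`, `2(r-2)(r-gcd(r,d)) ≥ 0`, and
`r - b = (gcd(r,d)/α)(b'(α-β) - 1) ≥ 0`. -/
theorem stmt_11 (r d g α b' β b DCI : ℤ) (hr : 3 ≤ r) (hrd : r ≤ d)
    (hdr : ¬ d % r = 1)
    (hg : g = Int.gcd r d) (hα : α = d / g) (hb' : b' = r / g)
    (hβ0 : 0 < β) (hβα : β < α) (hmod : α ∣ b' * β + 1)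
    (hb : b = g * (1 + b' * β) / α)
    (lam : ℕ) (n : ℕ → ℤ) (hn : ∀ i, 1 ≤ i → i ≤ lam → 2 ≤ n i)
    (c : ℕ → ℤ) (hc0 : c 0 = α) (hc1 : c 1 = β)
    (hclam : c lam = 1) (hclam1 : c (lam + 1) = 0)
    (hcpos : ∀ i ≤ lam, 0 < c i)
    (hcrec : ∀ i, 1 ≤ i → i ≤ lam → c (i - 1) = n i * c i - c (i + 1))
    (hDCI : DCI = -d * (r - 2) ^ 2 - r * (∑ i ∈ Finset.Icc 1 lam, (n i - 2))
      + 2 * (r - 2) * (r - g) + (r - b)) :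
    (-(r * ∑ i ∈ Finset.Icc 1 lam, (n i - 2)) ≤ 0) ∧
    (0 ≤ 2 * (r - 2) * (r - g)) ∧
    (r - b = g * (b' * (α - β) - 1) / α) ∧
    (0 ≤ r - b) := by
  have hα0 : 0 < α := lt_trans hβ0 hβα
  have hrpos : (0:ℤ) < r := by linarith
  have hg0 : 0 < g := by
    rw [hg]
    exact_mod_cast Int.gcd_pos_of_ne_zero_left d (by omega : r ≠ 0)
  have hgr : g ∣ r := hg ▸ Int.gcd_dvd_left r d
  have hrb' : r = g * b' := (Int.mul_ediv_cancel' hgr).symm ▸ by rw [hb', Int.mul_ediv_cancel' hgr]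
  obtain ⟨k, hk⟩ := hmod
  have hb'1 : 1 ≤ b' := by nlinarith
  have hbval : b = g * k := by
    rw [hb, show 1 + b' * β = α * k by linarith,
      show g * (α * k) = α * (g * k) by ring, Int.mul_ediv_cancel_left _ hα0.ne']
  have hbk : b' - k ≥ 0 := by nlinarith
  refine ⟨?_, ?_, ?_, ?_⟩
  · have hs : 0 ≤ ∑ i ∈ Finset.Icc 1 lam, (n i - 2) :=
      Finset.sum_nonneg fun i hi => by
        have h := hn i (Finset.mem_Icc.mp hi).1 (Finset.mem_Icc.mp hi).2; linarith
    nlinarith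
  · have hgle : g ≤ r := Int.le_of_dvd hrpos hgr
    nlinarith
  · rw [show b' * (α - β) - 1 = α * (b' - k) by nlinarith,
      show g * (α * (b' - k)) = α * (g * (b' - k)) by ring,
      Int.mul_ediv_cancel_left _ hα0.ne']
    nlinarith
  · nlinarith
end

section
/- For r ≥ 3 and d = rp + 1 (p ≥ 1): DCI_{r,d} = -(d-1)(r-2)^2, DCII_{r,d} = d - 1, and E_{r,d} = (d-1)(r-1)(3-r) + 3(d-1) + (d-1)(r-2)^2 = 4(d-1). -/
/-- For `r ≥ 3` and `d = rp + 1` (`p ≥ 1`): the weighted self-intersection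
`(∑_{k=1}^{p}(p+1-k)E_k)² = -rp` (with `E₁² = -r`, `E_k² = -2r` for `k ≥ 2`,
`E_k·E_{k±1} = r`, other products `0`), and hence
`DCI_{r,d} = (r-2)²·(that square) = -(d-1)(r-2)²`, `DCII_{r,d} = rλ = rp = d-1`,
and `E_{r,d} = (d-1)(r-1)(3-r) + 3·DCII - DCI = 4(d-1)`. -/
theorem stmt_13 (r p : ℤ) (hr : 3 ≤ r) (hp : 1 ≤ p) (d : ℤ) (hd : d = r * p + 1)
    (M : ℤ → ℤ → ℤ)
    (hM : ∀ k k', M k k' =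
      if k = k' then (if k = 1 then -r else -2 * r)
      else if (k - k').natAbs = 1 then r else 0)
    (S DCI DCII E : ℤ)
    (hS : S = ∑ k ∈ Finset.Icc 1 p, ∑ k' ∈ Finset.Icc 1 p,
      (p + 1 - k) * (p + 1 - k') * M k k')
    (hDCI : DCI = (r - 2) ^ 2 * S)
    (hDCII : DCII = r * p)
    (hE : E = (d - 1) * (r - 1) * (3 - r) + 3 * DCII - DCI) :
    S = -(r * p) ∧ DCI = -(d - 1) * (r - 2) ^ 2 ∧ DCII = d - 1 ∧ E = 4 * (d - 1) := by
  have hMsplit : ∀ k k' : ℤ, M k k' =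
      (if k' = k then (if k = 1 then -r else -2 * r) else 0) +
      ((if k' = k - 1 then r else 0) + (if k' = k + 1 then r else 0)) := by
    intro k k'
    rw [hM k k']
    split_ifs <;> omega
  have hrow : ∀ k ∈ Finset.Icc 1 p,
      (∑ k' ∈ Finset.Icc 1 p, (p + 1 - k) * (p + 1 - k') * M k k') =
      (if k = 1 then (p + 1 - k) * (-r) else 0) := by
    intro k hk
    rw [Finset.mem_Icc] at hk
    have : (∑ k' ∈ Finset.Icc 1 p, (p + 1 - k) * (p + 1 - k') * M k k') =
        (∑ k' ∈ Finset.Icc 1 p,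
          ((if k' = k then (p + 1 - k) * (p + 1 - k') * (if k = 1 then -r else -2 * r) else 0) +
           ((if k' = k - 1 then (p + 1 - k) * (p + 1 - k') * r else 0) +
            (if k' = k + 1 then (p + 1 - k) * (p + 1 - k') * r else 0)))) := by
      apply Finset.sum_congr rfl
      intro k' _
      rw [hMsplit k k']
      split_ifs <;> ring
    rw [this, Finset.sum_add_distrib, Finset.sum_add_distrib,
      Finset.sum_ite_eq' (Finset.Icc 1 p) k,
      Finset.sum_ite_eq' (Finset.Icc 1 p) (k - 1),
      Finset.sum_ite_eq' (Finset.Icc 1 p) (k + 1)]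
    simp only [Finset.mem_Icc]
    split_ifs <;>
      first
        | ring1
        | (exfalso; omega)
        | ((try (have hk1 : k = 1 := (by omega); subst hk1));
           (try (have hp1 : p = 1 := (by omega); subst hp1));
           (try (have hkp : k = p := (by omega); subst hkp));
           ring1)
  have hS' : S = -(r * p) := by
    rw [hS, Finset.sum_congr rfl hrow, Finset.sum_ite_eq' (Finset.Icc 1 p) 1
      (fun k => (p + 1 - k) * (-r))]
    have h1 : (1 : ℤ) ∈ Finset.Icc 1 p := by
      rw [Finset.mem_Icc]; omega
    rw [if_pos h1]; ring
  refine ⟨hS', ?_, ?_, ?_⟩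
  · rw [hDCI, hS', hd]; ring
  · rw [hDCII, hd]; ring
  · rw [hE, hDCI, hS', hDCII, hd]; ring
end

section
/- Suppose d ≥ 3, t_d = t_{d-1} = 0, the combinatorial identity Σ_r t_r r(r-1) = d(d-1) holds, and Hirzebruch's inequality t_2 + (3/4)t_3 ≥ d + Σ_{r≥5}(r-4)t_r holds. If E_{2,d} = 4(d-1), E_{3,d} ≥ 4(d-3), and E_{r,d} > -2r(r-1) for r ≥ 4, then Σ_r t_r E_{r,d} > 0. -/
/-- Suppose `d ≥ 3`, `t_d = t_{d-1} = 0`, `∑_r t_r r(r-1) = d(d-1)`, and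
Hirzebruch's inequality `t₂ + (3/4)t₃ ≥ d + ∑_{r≥5}(r-4)t_r` holds.  If
`E_{2,d} = 4(d-1)`, `E_{3,d} ≥ 4(d-3)`, and `E_{r,d} > -2r(r-1)` for `r ≥ 4`,
then `∑_r t_r E_{r,d} > 0`. -/
theorem stmt_18 (d : ℕ) (hd : 3 ≤ d) (t : ℕ → ℕ) (E : ℕ → ℝ)
    (htd : t d = 0) (htd1 : t (d - 1) = 0)
    (hcomb : ∑ r ∈ Finset.Icc 2 d, t r * (r * (r - 1)) = d * (d - 1))
    (hHir : (t 2 : ℝ) + (3 / 4) * t 3 ≥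
      (d : ℝ) + ∑ r ∈ Finset.Icc 5 d, ((r : ℝ) - 4) * t r)
    (hE2 : E 2 = 4 * ((d : ℝ) - 1))
    (hE3 : E 3 ≥ 4 * ((d : ℝ) - 3))
    (hEr : ∀ r : ℕ, 4 ≤ r → E r > -2 * r * (r - 1)) :
    0 < ∑ r ∈ Finset.Icc 2 d, (t r : ℝ) * E r := by
  have hsplit : Finset.Icc 2 d = insert 2 (insert 3 (Finset.Icc 4 d)) := by
    ext x; simp only [Finset.mem_Icc, Finset.mem_insert]; omega
  rw [hsplit] at hcomb ⊢
  rw [Finset.sum_insert (by simp), Finset.sum_insert (by simp)] at hcomb ⊢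
  set S4n := ∑ r ∈ Finset.Icc 4 d, t r * (r * (r - 1)) with hS4
  norm_num at hcomb
  -- real version of the combinatorial identity
  have hcombR : (t 2 : ℝ) * 2 + (t 3 : ℝ) * 6 + (S4n : ℝ) = (d : ℝ) * ((d : ℝ) - 1) := by
    have h : ((t 2 * 2 + t 3 * 6 + S4n : ℕ) : ℝ) = ((d * (d - 1) : ℕ) : ℝ) := by
      congr 1; omega
    rw [Nat.cast_mul d, Nat.cast_sub (by omega : 1 ≤ d)] at h
    push_cast at h
    linarith [h]
  -- bound the tail sum
  have htail : ∑ r ∈ Finset.Icc 4 d, (t r : ℝ) * E r ≥ -2 * (S4n : ℝ) := by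
    have hcastS : ((S4n : ℕ) : ℝ) = ∑ r ∈ Finset.Icc 4 d, ((t r * (r * (r - 1)) : ℕ) : ℝ) := by
      rw [hS4]; exact Nat.cast_sum _ _
    rw [ge_iff_le, hcastS, Finset.mul_sum]
    apply Finset.sum_le_sum
    intro r hr
    have hr4 : 4 ≤ r := (Finset.mem_Icc.mp hr).1
    have h1 : 1 ≤ r := by omega
    have hcast : ((t r * (r * (r - 1)) : ℕ) : ℝ) = (t r : ℝ) * ((r : ℝ) * ((r : ℝ) - 1)) := by
      rw [Nat.cast_mul, Nat.cast_mul, Nat.cast_sub h1, Nat.cast_one]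
    rw [hcast]
    have hE := (hEr r hr4).le
    have ht : (0 : ℝ) ≤ t r := Nat.cast_nonneg _
    nlinarith [mul_le_mul_of_nonneg_left hE ht]
  -- Hirzebruch gives t2 + (3/4) t3 ≥ d
  have hnn : (0 : ℝ) ≤ ∑ r ∈ Finset.Icc 5 d, ((r : ℝ) - 4) * t r := by
    apply Finset.sum_nonneg
    intro r hr
    have h5 : (5 : ℕ) ≤ r := (Finset.mem_Icc.mp hr).1
    have : (5 : ℝ) ≤ (r : ℝ) := by exact_mod_cast h5
    exact mul_nonneg (by linarith) (Nat.cast_nonneg _)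
  have hHir' : (t 2 : ℝ) + (3 / 4) * t 3 ≥ (d : ℝ) := by linarith
  have hdR : (3 : ℝ) ≤ (d : ℝ) := by exact_mod_cast hd
  have ht2 : (0 : ℝ) ≤ t 2 := Nat.cast_nonneg _
  have ht3 : (0 : ℝ) ≤ t 3 := Nat.cast_nonneg _
  have hb3 : (t 3 : ℝ) * E 3 ≥ (t 3 : ℝ) * (4 * ((d : ℝ) - 3)) :=
    mul_le_mul_of_nonneg_left hE3 ht3
  rw [hE2]
  nlinarith [mul_nonneg (by linarith : (0:ℝ) ≤ (d:ℝ))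
      (by linarith : (0:ℝ) ≤ (t 2 : ℝ) + (t 3 : ℝ) - (d : ℝ)),
    mul_pos (by linarith : (0:ℝ) < (d:ℝ)) (by linarith : (0:ℝ) < (d:ℝ)), hcombR, htail, hb3]
end
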